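/- Let c ∈ (0, 1/2), n ∈ ℕ, and let 𝒞 be a collection of subsets of [n] = {1,...,n}. Suppose that for every U ⊆ [n] there exists V ∈ 𝒞 with |U △ V| ≤ c·n (symmetric difference). Then n ≤ log₂|𝒞| / (1 − h₂(c)), where h₂(t) = t·log₂(1/t) + (1−t)·log₂(1/(1−t)) is the binary entropy function. -/

import Mathlib

open Finset Real

/-- Binary entropy function. -/
noncomputable def binEnt (t : ℝ) : ℝ :=
  t * Real.logb 2 (1 / t) + (1 - t) * Real.logb 2 (1 / (1 - t))

lemma binEnt_lt_one {c : ℝ} (hc : c < 1 / 2) : binEnt c < 1 := by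
  have hlog2 : (0:ℝ) < Real.log 2 := Real.log_pos (by norm_num)
  have h1 : binEnt c = Real.binEntropy c / Real.log 2 := by
    unfold binEnt Real.binEntropy
    rw [Real.logb, Real.logb, one_div, one_div]
    ring
  rw [h1, div_lt_one hlog2]
  exact Real.binEntropy_lt_log_two.2 (by intro h; rw [h] at hc; norm_num at hc)

lemma sum_choose_le_rpow {c : ℝ} (hc0 : 0 < c) (hc : c < 1 / 2) (n : ℕ) :
    (∑ i ∈ Finset.range (⌊c * n⌋₊ + 1), (n.choose i : ℝ)) ≤ (2:ℝ) ^ (binEnt c * n) := by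
  have h1c : (0:ℝ) < 1 - c := by linarith
  have hcn0 : (0:ℝ) ≤ c * n := by positivity
  set r := ⌊c * n⌋₊ with hr
  have hrcn : (r : ℝ) ≤ c * n := Nat.floor_le hcn0
  have hcnn : c * n ≤ n := by nlinarith [Nat.cast_nonneg (α := ℝ) n]
  have hrn : r ≤ n := by exact_mod_cast hrcn.trans hcnn
  set x : ℝ := (2:ℝ) ^ (-(binEnt c * n)) with hx
  have hx0 : 0 < x := Real.rpow_pos_of_pos (by norm_num) _
  have hb0 : 0 < c / (1 - c) := by positivity
  have hb1 : c / (1 - c) ≤ 1 := by rw [div_le_one h1c]; linarith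
  -- x = (1-c)^n * (c/(1-c))^(c*n)
  have hxval : x = (1 - c) ^ (n:ℝ) * (c / (1 - c)) ^ (c * n) := by
    have hc2 : (2:ℝ) ^ (Real.logb 2 c) = c := Real.rpow_logb (by norm_num) (by norm_num) hc0
    have h1c2 : (2:ℝ) ^ (Real.logb 2 (1 - c)) = 1 - c :=
      Real.rpow_logb (by norm_num) (by norm_num) h1c
    have hexp : -(binEnt c * n) =
        Real.logb 2 c * (c * n) + Real.logb 2 (1 - c) * ((1 - c) * n) := by
      unfold binEnt
      rw [one_div, one_div, Real.logb_inv, Real.logb_inv]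
      ring
    have e1 : (2:ℝ) ^ (Real.logb 2 c * (c * (n:ℝ))) = c ^ (c * (n:ℝ)) := by
      rw [Real.rpow_mul (by norm_num), hc2]
    have e2 : (2:ℝ) ^ (Real.logb 2 (1 - c) * ((1 - c) * (n:ℝ))) = (1 - c) ^ ((1 - c) * (n:ℝ)) := by
      rw [Real.rpow_mul (by norm_num), h1c2]
    rw [hx, hexp, Real.rpow_add (by norm_num), e1, e2,
      Real.div_rpow hc0.le h1c.le, show ((1:ℝ) - c) * (n:ℝ) = (n:ℝ) - c * n by ring,
      Real.rpow_sub h1c]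
    have hne : (1 - c) ^ (c * (n:ℝ)) ≠ 0 := (Real.rpow_pos_of_pos h1c _).ne'
    field_simp
  -- per-term bound and binomial theorem
  have key : (∑ i ∈ Finset.range (r + 1), (n.choose i : ℝ)) * x ≤ 1 := by
    rw [Finset.sum_mul]
    have hterm : ∀ i ∈ Finset.range (r + 1),
        (n.choose i : ℝ) * x ≤ c ^ i * (1 - c) ^ (n - i) * (n.choose i : ℝ) := by
      intro i hi
      have hir : i ≤ r := Nat.lt_succ_iff.1 (Finset.mem_range.1 hi)
      have hin : i ≤ n := hir.trans hrn
      have hicn : (i:ℝ) ≤ c * n := le_trans (by exact_mod_cast hir) hrcn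
      have hpow : c ^ i * (1 - c) ^ (n - i) = (1 - c) ^ (n:ℝ) * (c / (1 - c)) ^ (i:ℝ) := by
        have e3 : (c / (1 - c)) ^ (i:ℝ) = c ^ (i:ℝ) / (1 - c) ^ (i:ℝ) :=
          Real.div_rpow hc0.le h1c.le _
        have e4 : (1 - c) ^ (n:ℝ) = (1 - c) ^ (i:ℝ) * (1 - c) ^ ((n:ℝ) - (i:ℝ)) := by
          rw [← Real.rpow_add h1c]; ring_nf
        have e5 : (n:ℝ) - (i:ℝ) = ((n - i : ℕ) : ℝ) := by rw [Nat.cast_sub hin]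
        rw [e3, e4, e5]
        simp only [Real.rpow_natCast]
        field_simp
      have hxle : x ≤ c ^ i * (1 - c) ^ (n - i) := by
        rw [hxval, hpow]
        exact mul_le_mul_of_nonneg_left
          (Real.rpow_le_rpow_of_exponent_ge hb0 hb1 hicn)
          (Real.rpow_nonneg h1c.le _)
      calc (n.choose i : ℝ) * x ≤ (n.choose i : ℝ) * (c ^ i * (1 - c) ^ (n - i)) :=
            mul_le_mul_of_nonneg_left hxle (by positivity)
        _ = c ^ i * (1 - c) ^ (n - i) * (n.choose i : ℝ) := by ring
    calc (∑ i ∈ Finset.range (r + 1), (n.choose i : ℝ) * x)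
        ≤ ∑ i ∈ Finset.range (r + 1), c ^ i * (1 - c) ^ (n - i) * (n.choose i : ℝ) :=
          Finset.sum_le_sum hterm
      _ ≤ ∑ i ∈ Finset.range (n + 1), c ^ i * (1 - c) ^ (n - i) * (n.choose i : ℝ) := by
          apply Finset.sum_le_sum_of_subset_of_nonneg
            (Finset.range_subset_range.2 (by omega))
          intro i _ _
          positivity
      _ = (c + (1 - c)) ^ n := (add_pow c (1 - c) n).symm
      _ = 1 := by norm_num
  -- conclude
  have hxinv : 1 / x = (2:ℝ) ^ (binEnt c * n) := by
    rw [hx, one_div, ← Real.rpow_neg (by norm_num), neg_neg]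
  rw [← hxinv, le_div_iff₀ hx0]
  exact key

theorem stmt0 (c : ℝ) (hc0 : 0 < c) (hc : c < 1 / 2) (n : ℕ)
    (𝒞 : Finset (Finset (Fin n)))
    (hcov : ∀ U : Finset (Fin n), ∃ V ∈ 𝒞, ((symmDiff U V).card : ℝ) ≤ c * n) :
    (n : ℝ) ≤ Real.logb 2 𝒞.card / (1 - binEnt c) := by
  have hA : binEnt c < 1 := binEnt_lt_one hc
  have hpos : (0:ℝ) < 1 - binEnt c := by linarith
  obtain ⟨V0, hV0, -⟩ := hcov ∅
  have hCpos : 0 < 𝒞.card := Finset.card_pos.2 ⟨V0, hV0⟩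
  have hC1 : (1:ℝ) ≤ (𝒞.card : ℝ) := by exact_mod_cast hCpos
  set r := ⌊c * n⌋₊ with hr
  -- each ball has at most ∑ choose elements
  have hball : ∀ V : Finset (Fin n),
      (Finset.univ.filter fun U => ((symmDiff U V).card : ℝ) ≤ c * n).card ≤
        ∑ i ∈ Finset.range (r + 1), n.choose i := by
    intro V
    have h1 : (Finset.univ.filter fun U => ((symmDiff U V).card : ℝ) ≤ c * n).card ≤
        (Finset.univ.filter fun W : Finset (Fin n) => W.card ≤ r).card := by
      apply Finset.card_le_card_of_injOn (fun U => symmDiff U V)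
      · intro U hU
        simp only [Finset.mem_coe, Finset.mem_filter, Finset.mem_univ, true_and] at hU ⊢
        exact Nat.le_floor hU
      · intro a _ b _ h
        exact symmDiff_left_injective V h
    refine h1.trans ?_
    have h2 : (Finset.univ.filter fun W : Finset (Fin n) => W.card ≤ r) =
        (Finset.range (r + 1)).biUnion
          (fun i => Finset.powersetCard i (Finset.univ : Finset (Fin n))) := by
      ext W
      simp [Finset.mem_powersetCard_univ, Nat.lt_succ_iff]
    rw [h2]
    refine (Finset.card_biUnion_le).trans ?_
    apply le_of_eq
    apply Finset.sum_congr rfl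
    intro i _
    rw [Finset.card_powersetCard, Finset.card_univ, Fintype.card_fin]
  -- covering bound (natural numbers)
  have hnat : 2 ^ n ≤ 𝒞.card * ∑ i ∈ Finset.range (r + 1), n.choose i := by
    have hcover : (Finset.univ : Finset (Finset (Fin n))) ⊆
        𝒞.biUnion (fun V => Finset.univ.filter fun U => ((symmDiff U V).card : ℝ) ≤ c * n) := by
      intro U _
      obtain ⟨V, hV, hle⟩ := hcov U
      exact Finset.mem_biUnion.2 ⟨V, hV, by simp [hle]⟩
    calc 2 ^ n = (Finset.univ : Finset (Finset (Fin n))).card := by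
          simp [Finset.card_univ, Fintype.card_finset]
      _ ≤ (𝒞.biUnion fun V => Finset.univ.filter
            fun U => ((symmDiff U V).card : ℝ) ≤ c * n).card := Finset.card_le_card hcover
      _ ≤ ∑ V ∈ 𝒞, (Finset.univ.filter fun U => ((symmDiff U V).card : ℝ) ≤ c * n).card :=
          Finset.card_biUnion_le
      _ ≤ ∑ _V ∈ 𝒞, ∑ i ∈ Finset.range (r + 1), n.choose i :=
          Finset.sum_le_sum fun V _ => hball V
      _ = 𝒞.card * ∑ i ∈ Finset.range (r + 1), n.choose i := by
          rw [Finset.sum_const, smul_eq_mul]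
  -- pass to the reals
  have hreal : (2:ℝ) ^ (n:ℝ) ≤ (𝒞.card : ℝ) * (2:ℝ) ^ (binEnt c * n) := by
    have h1 : (2:ℝ) ^ (n:ℝ) ≤ (𝒞.card : ℝ) * ∑ i ∈ Finset.range (r + 1), (n.choose i : ℝ) := by
      rw [Real.rpow_natCast]
      calc (2:ℝ) ^ n = ((2 ^ n : ℕ) : ℝ) := by push_cast; ring
        _ ≤ ((𝒞.card * ∑ i ∈ Finset.range (r + 1), n.choose i : ℕ) : ℝ) := by
            exact_mod_cast hnat
        _ = (𝒞.card : ℝ) * ∑ i ∈ Finset.range (r + 1), (n.choose i : ℝ) := by push_cast; ring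
    exact h1.trans (mul_le_mul_of_nonneg_left (sum_choose_le_rpow hc0 hc n) (by positivity))
  -- take log base 2
  have hlog : (n:ℝ) ≤ Real.logb 2 (𝒞.card : ℝ) + binEnt c * n := by
    have h2 : Real.logb 2 ((2:ℝ) ^ (n:ℝ)) = (n:ℝ) := Real.logb_rpow (by norm_num) (by norm_num)
    have h3 := (Real.logb_le_logb (b := 2) (by norm_num)
      (Real.rpow_pos_of_pos (by norm_num) _) (by positivity)).2 hreal
    rw [h2, Real.logb_mul (by positivity) (by positivity),
      Real.logb_rpow (by norm_num) (by norm_num)] at h3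
    exact h3
  rw [le_div_iff₀ hpos]
  nlinarith [hlog]
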